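/- No formula in the language {¬,∧,∨,■,𝐈} defines □p on S5 frames: in the three-point S5 model M with universal accessibility, where p is exactly true at w₀ and w₂ and p is both true and false at w₁, there is no formula φ of this language that is both true and false at w₀ and also both true and false at w₂, whereas □p is both true and false at both w₀ and w₂. -/
import Mathlib


/-- Formulas of the language with ¬, ∧, ∨, □, ■, 𝐈 and ▲. -/
inductive Form : Type
  | var : ℕ → Form
  | neg : Form → Form
  | conj : Form → Form → Form
  | disj : Form → Form → Form
  | box : Form → Form
  | bbox : Form → Form
  | ign : Form → Form
  | tri : Form → Form

/-- A Kripke model for Belnap–Dunn modal logic. -/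
structure Model (W : Type) where
  R : W → W → Prop
  vp : ℕ → W → Prop
  vn : ℕ → W → Prop

mutual
  /-- support of truth -/
  def tr {W : Type} (M : Model W) : Form → W → Prop
    | .var n, w => M.vp n w
    | .neg φ, w => fa M φ w
    | .conj φ ψ, w => tr M φ w ∧ tr M ψ w
    | .disj φ ψ, w => tr M φ w ∨ tr M ψ w
    | .box φ, w => ∀ w', M.R w w' → tr M φ w'
    | .bbox φ, w => (∀ w', M.R w w' → tr M φ w') ∧
        ∀ w₁ w₂, M.R w w₁ → M.R w w₂ → fa M φ w₁ → fa M φ w₂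
    | .ign φ, w => tr M φ w ∧ (∀ w', M.R w w' → w' ≠ w → fa M φ w') ∧
        ∀ w₁ w₂, M.R w w₁ → w₁ ≠ w → M.R w w₂ → w₂ ≠ w → tr M φ w₁ → tr M φ w₂
    | .tri φ, w => (∀ w₁ w₂, M.R w w₁ → M.R w w₂ →
          (tr M φ w₁ → tr M φ w₂) ∧ (fa M φ w₁ → fa M φ w₂)) ∧
        ∀ w', M.R w w' → tr M φ w' ∨ fa M φ w'
  /-- support of falsity -/
  def fa {W : Type} (M : Model W) : Form → W → Prop
    | .var n, w => M.vn n w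
    | .neg φ, w => tr M φ w
    | .conj φ ψ, w => fa M φ w ∨ fa M ψ w
    | .disj φ ψ, w => fa M φ w ∧ fa M ψ w
    | .box φ, w => ∃ w', M.R w w' ∧ fa M φ w'
    | .bbox φ, w => (∃ w', M.R w w' ∧ fa M φ w') ∨
        ∃ w₁ w₂, M.R w w₁ ∧ M.R w w₂ ∧ tr M φ w₁ ∧ ¬ tr M φ w₂
    | .ign φ, w => fa M φ w ∨ (∃ w', M.R w w' ∧ w' ≠ w ∧ tr M φ w') ∨
        ∃ w₁ w₂, (M.R w w₁ ∧ w₁ ≠ w) ∧ (M.R w w₂ ∧ w₂ ≠ w) ∧ ¬ fa M φ w₁ ∧ fa M φ w₂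
    | .tri φ, w => (∃ w₁ w₂, M.R w w₁ ∧ M.R w w₂ ∧ tr M φ w₁ ∧ ¬ tr M φ w₂) ∨
        (∃ w₁ w₂, M.R w w₁ ∧ M.R w w₂ ∧ fa M φ w₁ ∧ ¬ fa M φ w₂) ∨
        (∃ w₁ w₂, M.R w w₁ ∧ M.R w w₂ ∧ tr M φ w₁ ∧ fa M φ w₂)
end

/-- φ contains an occurrence of □ -/
def hasBox : Form → Prop
  | .var _ => False
  | .neg φ => hasBox φ
  | .conj φ ψ => hasBox φ ∨ hasBox ψ
  | .disj φ ψ => hasBox φ ∨ hasBox ψ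
  | .box _ => True
  | .bbox φ => hasBox φ
  | .ign φ => hasBox φ
  | .tri φ => hasBox φ

/-- φ contains an occurrence of ■ -/
def hasBBox : Form → Prop
  | .var _ => False
  | .neg φ => hasBBox φ
  | .conj φ ψ => hasBBox φ ∨ hasBBox ψ
  | .disj φ ψ => hasBBox φ ∨ hasBBox ψ
  | .box φ => hasBBox φ
  | .bbox _ => True
  | .ign φ => hasBBox φ
  | .tri φ => hasBBox φ

/-- φ contains an occurrence of 𝐈 -/
def hasIgn : Form → Prop
  | .var _ => False
  | .neg φ => hasIgn φ
  | .conj φ ψ => hasIgn φ ∨ hasIgn ψ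
  | .disj φ ψ => hasIgn φ ∨ hasIgn ψ
  | .box φ => hasIgn φ
  | .bbox φ => hasIgn φ
  | .ign _ => True
  | .tri φ => hasIgn φ

/-- φ contains an occurrence of ▲ -/
def hasTri : Form → Prop
  | .var _ => False
  | .neg φ => hasTri φ
  | .conj φ ψ => hasTri φ ∨ hasTri ψ
  | .disj φ ψ => hasTri φ ∨ hasTri ψ
  | .box φ => hasTri φ
  | .bbox φ => hasTri φ
  | .ign φ => hasTri φ
  | .tri _ => True

/-- validity of the sequent φ ⊢ χ on the frame (W,R) -/
def validOn {W : Type} (R : W → W → Prop) (φ χ : Form) : Prop :=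
  ∀ (vp vn : ℕ → W → Prop) (w : W), tr ⟨R, vp, vn⟩ φ w → tr ⟨R, vp, vn⟩ χ w

/-- ♦φ := ¬■¬φ -/
def dia (φ : Form) : Form := .neg (.bbox (.neg φ))


def M3 : Model (Fin 3) := ⟨fun _ _ => True, fun _ _ => True, fun _ w => w = 1⟩

def sw : Fin 3 → Fin 3 := ![2, 1, 0]

lemma sw_sw : ∀ w, sw (sw w) = w := by decide

lemma sw_inj : ∀ a b : Fin 3, sw a = sw b → a = b := by decide

lemma symm3 : ∀ φ : Form,
    (∀ w, tr M3 φ w ↔ tr M3 φ (sw w)) ∧ (∀ w, fa M3 φ w ↔ fa M3 φ (sw w)) := by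
  have iff_of_mp : ∀ (P : Fin 3 → Prop), (∀ w, P w → P (sw w)) →
      ∀ w, P w ↔ P (sw w) := by
    intro P h w
    exact ⟨h w, fun hp => by have := h (sw w) hp; rwa [sw_sw] at this⟩
  intro φ
  induction φ with
  | var n =>
      constructor <;> intro w <;> simp only [tr, fa, M3] <;> revert w <;> decide
  | neg φ ih =>
      exact ⟨fun w => ih.2 w, fun w => ih.1 w⟩
  | conj φ ψ ihφ ihψ =>
      constructor <;> intro w <;> simp only [tr, fa]
      · rw [ihφ.1 w, ihψ.1 w]
      · rw [ihφ.2 w, ihψ.2 w]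
  | disj φ ψ ihφ ihψ =>
      constructor <;> intro w <;> simp only [tr, fa]
      · rw [ihφ.1 w, ihψ.1 w]
      · rw [ihφ.2 w, ihψ.2 w]
  | box φ ih =>
      constructor <;> intro w <;> simp [tr, fa, M3]
  | bbox φ ih =>
      constructor <;> intro w <;> simp [tr, fa, M3]
  | tri φ ih =>
      constructor <;> intro w <;> simp [tr, fa, M3]
  | ign φ ih =>
      constructor
      · apply iff_of_mp
        intro w h
        simp only [tr] at h ⊢
        obtain ⟨h1, h2, h3⟩ := h
        refine ⟨(ih.1 w).mp h1, ?_, ?_⟩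
        · intro w' _ hne
          have hf := h2 (sw w') trivial (fun h => hne (by rw [← h, sw_sw]))
          exact (ih.2 w').mpr hf
        · intro w₁ w₂ _ h1n _ h2n ht
          have := h3 (sw w₁) (sw w₂) trivial (fun h => h1n (by rw [← h, sw_sw]))
            trivial (fun h => h2n (by rw [← h, sw_sw])) ((ih.1 w₁).mp ht)
          exact (ih.1 w₂).mpr this
      · apply iff_of_mp
        intro w h
        simp only [fa] at h ⊢
        rcases h with h | ⟨w', _, hne, ht⟩ | ⟨w₁, w₂, ⟨_, h1n⟩, ⟨_, h2n⟩, hnf, hf⟩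
        · exact Or.inl ((ih.2 w).mp h)
        · exact Or.inr (Or.inl ⟨sw w', trivial,
            fun h => hne (sw_inj _ _ h), (ih.1 w').mp ht⟩)
        · exact Or.inr (Or.inr ⟨sw w₁, sw w₂,
            ⟨trivial, fun h => h1n (sw_inj _ _ h)⟩,
            ⟨trivial, fun h => h2n (sw_inj _ _ h)⟩,
            fun h => hnf ((ih.2 w₁).mpr h), (ih.2 w₂).mp hf⟩)

lemma key : ∀ φ : Form, ¬ hasBox φ → ¬ hasTri φ → ¬ (tr M3 φ 0 ∧ fa M3 φ 0) := by
  intro φ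
  induction φ with
  | var n =>
      intro _ _ ⟨_, hf⟩
      simp only [fa, M3] at hf
      exact absurd hf (by decide)
  | neg φ ih =>
      intro hb ht ⟨h1, h2⟩
      exact ih hb ht ⟨h2, h1⟩
  | conj φ ψ ihφ ihψ =>
      intro hb ht ⟨⟨h1, h2⟩, hf⟩
      have hb' : ¬ hasBox φ ∧ ¬ hasBox ψ := by
        constructor <;> intro h <;> exact hb (by simp [hasBox, h])
      have ht' : ¬ hasTri φ ∧ ¬ hasTri ψ := by
        constructor <;> intro h <;> exact ht (by simp [hasTri, h])
      cases hf with
      | inl h => exact ihφ hb'.1 ht'.1 ⟨h1, h⟩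
      | inr h => exact ihψ hb'.2 ht'.2 ⟨h2, h⟩
  | disj φ ψ ihφ ihψ =>
      intro hb ht ⟨hT, h1, h2⟩
      have hb' : ¬ hasBox φ ∧ ¬ hasBox ψ := by
        constructor <;> intro h <;> exact hb (by simp [hasBox, h])
      have ht' : ¬ hasTri φ ∧ ¬ hasTri ψ := by
        constructor <;> intro h <;> exact ht (by simp [hasTri, h])
      cases hT with
      | inl h => exact ihφ hb'.1 ht'.1 ⟨h, h1⟩
      | inr h => exact ihψ hb'.2 ht'.2 ⟨h, h2⟩
  | box φ ih =>
      intro hb _ _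
      exact hb trivial
  | tri φ ih =>
      intro _ ht _
      exact ht trivial
  | bbox φ ih =>
      intro hb ht ⟨⟨hall, hag⟩, hfa⟩
      rcases hfa with ⟨w, _, hf⟩ | ⟨w₁, w₂, _, _, _, hnt⟩
      · exact ih hb ht ⟨hall 0 trivial, hag w 0 trivial trivial hf⟩
      · exact hnt (hall w₂ trivial)
  | ign φ ih =>
      intro hb ht ⟨⟨htr, hfaAll, _⟩, _⟩
      have hf2 : fa M3 φ 2 := hfaAll 2 trivial (by decide)
      have hf0 : fa M3 φ 0 := by
        have := (symm3 φ).2 0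
        simp only [show sw 0 = 2 from rfl] at this
        exact this.mpr hf2
      exact ih hb ht ⟨htr, hf0⟩

/-- no {¬,∧,∨,■,𝐈}-formula defines □p on S5 frames. -/
theorem bbox_ign_cannot_define_box :
    let M : Model (Fin 3) := ⟨fun _ _ => True, fun _ _ => True, fun _ w => w = 1⟩
    (∀ φ : Form, ¬ hasBox φ → ¬ hasTri φ →
      ¬ (tr M φ 0 ∧ fa M φ 0 ∧ tr M φ 2 ∧ fa M φ 2)) ∧
    (tr M (.box (.var 0)) 0 ∧ fa M (.box (.var 0)) 0 ∧
     tr M (.box (.var 0)) 2 ∧ fa M (.box (.var 0)) 2) := by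
  intro M
  constructor
  · intro φ hb ht ⟨h1, h2, _, _⟩
    exact key φ hb ht ⟨h1, h2⟩
  · refine ⟨?_, ⟨1, trivial, rfl⟩, ?_, ⟨1, trivial, rfl⟩⟩ <;>
      · intro w' _; exact trivial
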